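/- Every fixed-point-free orientation-preserving piecewise linear homeomorphism of an open interval I is strongly reversible in PL(I) by an orientation-reversing involution. -/

import Mathlib

open Set

/-- `f` is piecewise linear on the open interval `I`: its break points are locally
finite in `I`, and off them `f` is locally affine. -/
def IsPLOn (f : ℝ → ℝ) (I : Set ℝ) : Prop :=
  ∃ B : Set ℝ, (∀ x ∈ I, ∃ ε > 0, (B ∩ Set.Ioo (x - ε) (x + ε)).Finite) ∧
    ∀ x ∈ I \ B, ∃ a b : ℝ, ∀ᶠ y in nhds x, y ∈ I → f y = a * y + b

/-- `f` represents an element of `PL⁺(I)`: an increasing piecewise linear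
homeomorphism of the open interval `I` onto itself. -/
def PLIntPlus (f : ℝ → ℝ) (I : Set ℝ) : Prop :=
  Set.BijOn f I I ∧ StrictMonoOn f I ∧ IsPLOn f I

/-- `f` represents an element of `PL⁻(I)`: a decreasing piecewise linear
homeomorphism of the open interval `I` onto itself. -/
def PLIntMinus (f : ℝ → ℝ) (I : Set ℝ) : Prop :=
  Set.BijOn f I I ∧ StrictAntiOn f I ∧ IsPLOn f I

/-- `f` represents an element of `PL(I)`. -/
def PLInt (f : ℝ → ℝ) (I : Set ℝ) : Prop := PLIntPlus f I ∨ PLIntMinus f I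

open Filter Topology

namespace PLRev

/-- locally affine at a point -/
def LA (g : ℝ → ℝ) (x : ℝ) : Prop := ∃ c d : ℝ, ∀ᶠ y in nhds x, g y = c * y + d

/-- non-affine points are locally finite on I -/
def GoodPL (g : ℝ → ℝ) (I : Set ℝ) : Prop :=
  ∀ x ∈ I, ∃ s ∈ nhds x, s ⊆ I ∧ {y ∈ s | ¬ LA g y}.Finite

theorem GoodPL.isPLOn {g : ℝ → ℝ} {I : Set ℝ} (hI : IsOpen I) (h : GoodPL g I) :
    IsPLOn g I := by
  refine ⟨{x ∈ I | ¬ LA g x}, fun x hx => ?_, fun x hx => ?_⟩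
  · obtain ⟨s, hs, -, hfin⟩ := h x hx
    obtain ⟨ε, hε, hball⟩ := Metric.mem_nhds_iff.1 hs
    refine ⟨ε, hε, hfin.subset ?_⟩
    rintro y ⟨hy1, hy2⟩
    rw [← Real.ball_eq_Ioo] at hy2
    exact ⟨hball hy2, hy1.2⟩
  · have hx1 : x ∈ I := hx.1
    have : LA g x := by
      by_contra hc
      exact hx.2 ⟨hx1, hc⟩
    obtain ⟨c, d, hcd⟩ := this
    exact ⟨c, d, hcd.mono fun y hy _ => hy⟩

theorem isPLOn_goodPL {g : ℝ → ℝ} {I : Set ℝ} (hI : IsOpen I) (h : IsPLOn g I) :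
    GoodPL g I := by
  obtain ⟨B, hB1, hB2⟩ := h
  intro x hx
  obtain ⟨ε, hε, hfin⟩ := hB1 x hx
  obtain ⟨δ, hδ, hball⟩ := Metric.mem_nhds_iff.1 (hI.mem_nhds hx)
  refine ⟨Metric.ball x (min ε δ), Metric.ball_mem_nhds x (lt_min hε hδ), ?_, ?_⟩
  · exact fun y hy => hball (Metric.ball_subset_ball (min_le_right _ _) hy)
  · refine hfin.subset ?_
    rintro y ⟨hy1, hy2⟩
    have hyI : y ∈ I := hball (Metric.ball_subset_ball (min_le_right _ _) hy1)
    have hyB : y ∈ B := by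
      by_contra hc
      obtain ⟨c, d, hcd⟩ := hB2 y ⟨hyI, hc⟩
      exact hy2 ⟨c, d, (hcd.and (hI.eventually_mem hyI)).mono fun z ⟨h1, h2⟩ => h1 h2⟩
    refine ⟨hyB, ?_⟩
    rw [← Real.ball_eq_Ioo]
    exact Metric.ball_subset_ball (min_le_left _ _) hy1

/-- composition of maps with locally finite break sets -/
theorem GoodPL.comp {g h : ℝ → ℝ} {I : Set ℝ} (hI : IsOpen I)
    (hg : GoodPL g I) (hh : GoodPL h I) (hmaps : MapsTo g I I)
    (hcont : ∀ x ∈ I, ContinuousAt g x) (hinj : InjOn g I) :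
    GoodPL (h ∘ g) I := by
  intro x hx
  obtain ⟨s, hs, hsI, hsfin⟩ := hg x hx
  obtain ⟨s', hs', hs'I, hs'fin⟩ := hh (g x) (hmaps hx)
  refine ⟨s ∩ g ⁻¹' s', inter_mem hs ((hcont x hx).preimage_mem_nhds hs'), 
    fun y hy => hsI hy.1, ?_⟩
  have key : {y ∈ s ∩ g ⁻¹' s' | ¬ LA (h ∘ g) y} ⊆
      {y ∈ s | ¬ LA g y} ∪ {y ∈ s ∩ g ⁻¹' s' | g y ∈ {w ∈ s' | ¬ LA h w}} := by
    rintro y ⟨⟨hys, hys'⟩, hyn⟩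
    by_cases h1 : LA g y
    · by_cases h2 : LA h (g y)
      · exfalso
        obtain ⟨c1, d1, hc1⟩ := h1
        obtain ⟨c2, d2, hc2⟩ := h2
        refine hyn ⟨c2 * c1, c2 * d1 + d2, ?_⟩
        have hgt : Filter.Tendsto g (nhds y) (nhds (g y)) := hcont y (hsI hys)
        filter_upwards [hc1, hgt.eventually hc2] with z h1z h2z
        show h (g z) = _
        rw [h2z, h1z]; ring
      · exact Or.inr ⟨⟨hys, hys'⟩, hys', h2⟩
    · exact Or.inl ⟨hys, h1⟩
  refine (Set.Finite.union (hsfin) ?_).subset key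
  have : {y ∈ s ∩ g ⁻¹' s' | g y ∈ {w ∈ s' | ¬ LA h w}} ⊆ I ∩ g ⁻¹' {w ∈ s' | ¬ LA h w} := by
    rintro y ⟨⟨hys, _⟩, hmem⟩
    exact ⟨hsI hys, hmem⟩
  refine Set.Finite.subset ?_ this
  refine Set.Finite.of_finite_image ?_ (hinj.mono inter_subset_left)
  exact hs'fin.subset (by rintro _ ⟨y, ⟨hyI, hmem⟩, rfl⟩; exact hmem)

theorem GoodPL.congr {g h : ℝ → ℝ} {I : Set ℝ} (hg : GoodPL g I) (heq : ∀ x, g x = h x) :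
    GoodPL h I := by
  have : g = h := funext heq
  rwa [← this]


/-- the inverse homeomorphism -/
noncomputable def fi (f : ℝ → ℝ) (a b : ℝ) : ℝ → ℝ := Function.invFunOn f (Set.Ioo a b)

/-- integer iterates -/
noncomputable def pw (f : ℝ → ℝ) (a b : ℝ) (n : ℤ) : ℝ → ℝ :=
  if 0 ≤ n then f^[n.toNat] else (fi f a b)^[(-n).toNat]

structure Setup (a b : ℝ) (f : ℝ → ℝ) : Prop where
  hab : a < b
  hbij : Set.BijOn f (Set.Ioo a b) (Set.Ioo a b)
  hmono : StrictMonoOn f (Set.Ioo a b)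
  hgt : ∀ x ∈ Set.Ioo a b, x < f x

namespace Setup

variable {a b : ℝ} {f : ℝ → ℝ} (S : Setup a b f)
include S

theorem maps : MapsTo f (Ioo a b) (Ioo a b) := S.hbij.mapsTo

theorem invOn : InvOn (fi f a b) f (Ioo a b) (Ioo a b) := S.hbij.invOn_invFunOn

theorem left_inv {x : ℝ} (hx : x ∈ Ioo a b) : fi f a b (f x) = x := S.invOn.1 hx

theorem right_inv {y : ℝ} (hy : y ∈ Ioo a b) : f (fi f a b y) = y := S.invOn.2 hy

theorem finv_bij : Set.BijOn (fi f a b) (Ioo a b) (Ioo a b) :=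
  S.invOn.symm.bijOn S.hbij.surjOn.mapsTo_invFunOn S.hbij.mapsTo

theorem finv_maps : MapsTo (fi f a b) (Ioo a b) (Ioo a b) := S.finv_bij.mapsTo

theorem finv_mono : StrictMonoOn (fi f a b) (Ioo a b) := by
  intro x hx y hy hxy
  by_contra hc
  push_neg at hc
  have := S.hmono.monotoneOn (S.finv_maps hy) (S.finv_maps hx) hc
  rw [S.right_inv hx, S.right_inv hy] at this
  exact absurd this (not_le.2 hxy)

theorem finv_lt {x : ℝ} (hx : x ∈ Ioo a b) : fi f a b x < x := by
  have := S.hgt _ (S.finv_maps hx)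
  rwa [S.right_inv hx] at this

theorem cont {x : ℝ} (hx : x ∈ Ioo a b) : ContinuousAt f x := by
  refine S.hmono.continuousAt_of_image_mem_nhds (isOpen_Ioo.mem_nhds hx) ?_
  rw [S.hbij.image_eq]
  exact isOpen_Ioo.mem_nhds (S.maps hx)

theorem finv_cont {x : ℝ} (hx : x ∈ Ioo a b) : ContinuousAt (fi f a b) x := by
  refine S.finv_mono.continuousAt_of_image_mem_nhds (isOpen_Ioo.mem_nhds hx) ?_
  rw [S.finv_bij.image_eq]
  exact isOpen_Ioo.mem_nhds (S.finv_maps hx)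

theorem pw_maps (n : ℤ) {x : ℝ} (hx : x ∈ Ioo a b) : pw f a b n x ∈ Ioo a b := by
  unfold pw
  split
  · exact S.maps.iterate _ hx
  · exact S.finv_maps.iterate _ hx

omit S in
theorem pw_zero (x : ℝ) : pw f a b 0 x = x := by simp [pw]

theorem pw_succ (n : ℤ) {x : ℝ} (hx : x ∈ Ioo a b) :
    pw f a b (n + 1) x = f (pw f a b n x) := by
  rcases le_or_gt 0 n with hn | hn
  · have h1 : (0:ℤ) ≤ n + 1 := by omega
    have h2 : (n + 1).toNat = n.toNat + 1 := by omega
    simp only [pw, if_pos hn, if_pos h1, h2, Function.iterate_succ_apply']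
  · rcases eq_or_lt_of_le (by omega : n + 1 ≤ 0) with h0 | h0
    · have hn1 : n = -1 := by omega
      subst hn1
      simp only [pw]
      norm_num
      exact (S.right_inv hx).symm
    · have h2 : (-n).toNat = (-(n+1)).toNat + 1 := by omega
      simp only [pw, if_neg (by omega : ¬ (0:ℤ) ≤ n + 1), if_neg (by omega : ¬ (0:ℤ) ≤ n), h2,
        Function.iterate_succ_apply']
      rw [S.right_inv]
      exact S.finv_maps.iterate _ hx

theorem pw_pred (n : ℤ) {x : ℝ} (hx : x ∈ Ioo a b) :
    pw f a b (n - 1) x = fi f a b (pw f a b n x) := by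
  have := S.pw_succ (n - 1) hx
  rw [sub_add_cancel] at this
  rw [this, S.left_inv (S.pw_maps _ hx)]

theorem pw_add (m n : ℤ) {x : ℝ} (hx : x ∈ Ioo a b) :
    pw f a b (m + n) x = pw f a b m (pw f a b n x) := by
  induction m using Int.induction_on with
  | zero => rw [pw_zero, zero_add]
  | succ k ih =>
      have : (k : ℤ) + 1 + n = (k + n) + 1 := by ring
      rw [this, S.pw_succ _ hx, ih, ← S.pw_succ _ (S.pw_maps _ hx)]
  | pred k ih =>
      have : -(k : ℤ) - 1 + n = (-k + n) - 1 := by ring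
      rw [this, S.pw_pred _ hx, ih, ← S.pw_pred _ (S.pw_maps _ hx)]

theorem pw_one {x : ℝ} (hx : x ∈ Ioo a b) : pw f a b 1 x = f x := by
  have := S.pw_succ 0 hx
  rwa [zero_add, pw_zero] at this

theorem pw_neg_one {x : ℝ} (hx : x ∈ Ioo a b) : pw f a b (-1) x = fi f a b x := by
  have := S.pw_pred 0 hx
  rwa [zero_sub, pw_zero] at this

theorem pw_lt_succ (n : ℤ) {x : ℝ} (hx : x ∈ Ioo a b) :
    pw f a b n x < pw f a b (n + 1) x := by
  rw [S.pw_succ _ hx]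
  exact S.hgt _ (S.pw_maps _ hx)

theorem pw_strictMono_int {x : ℝ} (hx : x ∈ Ioo a b) :
    StrictMono (fun n => pw f a b n x) :=
  strictMono_int_of_lt_succ fun n => S.pw_lt_succ n hx

theorem pw_strictMonoOn (n : ℤ) : StrictMonoOn (pw f a b n) (Ioo a b) := by
  have key : ∀ (g : ℝ → ℝ), StrictMonoOn g (Ioo a b) → MapsTo g (Ioo a b) (Ioo a b) →
      ∀ k : ℕ, StrictMonoOn g^[k] (Ioo a b) := by
    intro g hg hm k
    induction k with
    | zero => simpa using strictMonoOn_id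
    | succ k ih =>
        intro x hx y hy hxy
        rw [Function.iterate_succ_apply, Function.iterate_succ_apply]
        exact ih (hm hx) (hm hy) (hg hx hy hxy)
  unfold pw
  split
  · exact key f S.hmono S.maps _
  · exact key _ S.finv_mono S.finv_maps _

theorem pw_injOn (n : ℤ) : InjOn (pw f a b n) (Ioo a b) := (S.pw_strictMonoOn n).injOn

theorem pw_cont (n : ℤ) {x : ℝ} (hx : x ∈ Ioo a b) : ContinuousAt (pw f a b n) x := by
  have key : ∀ (g : ℝ → ℝ), (∀ y ∈ Ioo a b, ContinuousAt g y) → MapsTo g (Ioo a b) (Ioo a b) →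
      ∀ k : ℕ, ∀ y ∈ Ioo a b, ContinuousAt g^[k] y := by
    intro g hg hm k
    induction k with
    | zero => intro y _; simpa using continuousAt_id
    | succ k ih =>
        intro y hy
        rw [Function.iterate_succ]
        exact ContinuousAt.comp (ih _ (hm hy)) (hg y hy)
  unfold pw
  split
  · exact key f (fun y hy => S.cont hy) S.maps _ x hx
  · exact key _ (fun y hy => S.finv_cont hy) S.finv_maps _ x hx

end Setup

open Classical in
/-- index of the fundamental-domain representative -/
noncomputable def Nfd (f : ℝ → ℝ) (a b : ℝ) (x : ℝ) : ℤ :=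
  if h : ∃ n : ℤ, pw f a b n x ∈ Ico ((a+b)/2) (f ((a+b)/2)) then h.choose else 0

/-- the reversing involution -/
noncomputable def al (f : ℝ → ℝ) (a b : ℝ) (x : ℝ) : ℝ :=
  pw f a b (Nfd f a b x) ((a+b)/2 + f ((a+b)/2) - pw f a b (Nfd f a b x) x)

namespace Setup
variable {a b : ℝ} {f : ℝ → ℝ} (S : Setup a b f)
include S

theorem mid_mem : (a+b)/2 ∈ Ioo a b := by
  constructor <;> [skip; skip] <;> [linarith [S.hab]; linarith [S.hab]]

theorem mid1_mem : f ((a+b)/2) ∈ Ioo a b := S.maps (S.mid_mem)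

theorem mid_lt : (a+b)/2 < f ((a+b)/2) := S.hgt _ S.mid_mem

theorem Icc_sub : Icc ((a+b)/2) (f ((a+b)/2)) ⊆ Ioo a b := by
  intro y hy
  exact ⟨lt_of_lt_of_le S.mid_mem.1 hy.1, lt_of_le_of_lt hy.2 S.mid1_mem.2⟩

/-- every forward orbit eventually passes the base point -/
theorem exists_ge {x : ℝ} (hx : x ∈ Ioo a b) : ∃ n : ℤ, (a+b)/2 ≤ pw f a b n x := by
  by_contra hc
  push_neg at hc
  set u : ℕ → ℝ := fun k => f^[k] x with hu
  have hui : ∀ k, u k = pw f a b (k : ℤ) x := by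
    intro k
    simp [hu, pw, Int.toNat_natCast]
  have humem : ∀ k, u k ∈ Ioo a b := fun k => (hui k) ▸ S.pw_maps _ hx
  have humono : Monotone u := by
    intro i j hij
    rcases eq_or_lt_of_le hij with rfl | h
    · rfl
    · rw [hui i, hui j]
      exact le_of_lt (S.pw_strictMono_int hx (by exact_mod_cast h))
  have hbdd : BddAbove (Set.range u) := by
    refine ⟨(a+b)/2, ?_⟩
    rintro _ ⟨k, rfl⟩
    exact le_of_lt ((hui k) ▸ hc k)
  have htend : Tendsto u atTop (𝓝 (⨆ k, u k)) := tendsto_atTop_ciSup humono hbdd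
  set L := ⨆ k, u k with hL
  have hLmem : L ∈ Ioo a b := by
    constructor
    · exact lt_of_lt_of_le (humem 0).1 (le_ciSup hbdd 0)
    · exact lt_of_le_of_lt (ciSup_le fun k => le_of_lt ((hui k) ▸ hc k)) S.mid_mem.2
  have h1 : Tendsto (fun k => u (k + 1)) atTop (𝓝 L) :=
    htend.comp (tendsto_add_atTop_nat 1)
  have h2 : Tendsto (fun k => f (u k)) atTop (𝓝 (f L)) :=
    (S.cont hLmem).tendsto.comp htend
  have h3 : ∀ k, u (k+1) = f (u k) := fun k => Function.iterate_succ_apply' f k x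
  have : f L = L := tendsto_nhds_unique (by simpa [← h3] using h2) h1
  exact absurd this (ne_of_gt (S.hgt _ hLmem))

theorem exists_lt {x : ℝ} (hx : x ∈ Ioo a b) : ∃ n : ℤ, pw f a b n x < (a+b)/2 := by
  by_contra hc
  push_neg at hc
  set u : ℕ → ℝ := fun k => (fi f a b)^[k] x with hu
  have hui : ∀ k, u k = pw f a b (-(k : ℤ)) x := by
    intro k
    rcases Nat.eq_zero_or_pos k with rfl | hk
    · simp [hu, pw]
    · have h0 : ¬ (0:ℤ) ≤ -(k:ℤ) := by omega
      simp [hu, pw, h0, hk.ne']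
  have humem : ∀ k, u k ∈ Ioo a b := fun k => (hui k) ▸ S.pw_maps _ hx
  have huanti : Antitone u := by
    intro i j hij
    rcases eq_or_lt_of_le hij with rfl | h
    · rfl
    · rw [hui i, hui j]
      exact le_of_lt (S.pw_strictMono_int hx (by omega))
  have hbdd : BddBelow (Set.range u) := by
    refine ⟨(a+b)/2, ?_⟩
    rintro _ ⟨k, rfl⟩
    exact (hui k) ▸ hc _
  have htend : Tendsto u atTop (𝓝 (⨅ k, u k)) := tendsto_atTop_ciInf huanti hbdd
  set L := ⨅ k, u k with hL
  have hLmem : L ∈ Ioo a b := by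
    constructor
    · exact lt_of_lt_of_le S.mid_mem.1 (le_ciInf fun k => (hui k) ▸ hc _)
    · exact lt_of_le_of_lt (ciInf_le hbdd 0) (humem 0).2
  have h1 : Tendsto (fun k => u (k + 1)) atTop (𝓝 L) :=
    htend.comp (tendsto_add_atTop_nat 1)
  have h2 : Tendsto (fun k => fi f a b (u k)) atTop (𝓝 (fi f a b L)) :=
    (S.finv_cont hLmem).tendsto.comp htend
  have h3 : ∀ k, u (k+1) = fi f a b (u k) := fun k =>
    Function.iterate_succ_apply' (fi f a b) k x
  have : fi f a b L = L := tendsto_nhds_unique (by simpa [← h3] using h2) h1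
  exact absurd this (ne_of_lt (S.finv_lt hLmem))

theorem exists_fund {x : ℝ} (hx : x ∈ Ioo a b) :
    ∃ n : ℤ, pw f a b n x ∈ Ico ((a+b)/2) (f ((a+b)/2)) := by
  obtain ⟨n₀, hn₀⟩ := S.exists_ge hx
  obtain ⟨m₀, hm₀⟩ := S.exists_lt hx
  have hbdd : ∃ c : ℤ, ∀ z : ℤ, (a+b)/2 ≤ pw f a b z x → c ≤ z := by
    refine ⟨m₀, fun z hz => ?_⟩
    by_contra hzc
    push_neg at hzc
    have := S.pw_strictMono_int hx hzc
    simp only at this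
    linarith
  obtain ⟨lb, hlb1, hlb2⟩ := Int.exists_least_of_bdd hbdd ⟨n₀, hn₀⟩
  refine ⟨lb, hlb1, ?_⟩
  have hpred : ¬ (a+b)/2 ≤ pw f a b (lb - 1) x := by
    intro hcon
    have := hlb2 _ hcon
    omega
  push_neg at hpred
  have heq : pw f a b lb x = f (pw f a b (lb - 1) x) := by
    have := S.pw_succ (lb - 1) hx
    rwa [sub_add_cancel] at this
  rw [heq]
  exact S.hmono (S.pw_maps _ hx) S.mid_mem hpred

theorem fund_unique {x : ℝ} (hx : x ∈ Ioo a b) {m n : ℤ}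
    (hm : pw f a b m x ∈ Ico ((a+b)/2) (f ((a+b)/2)))
    (hn : pw f a b n x ∈ Ico ((a+b)/2) (f ((a+b)/2))) : m = n := by
  by_contra hc
  wlog hlt : m < n generalizing m n
  · exact this hn hm (Ne.symm hc) (by omega)
  have h1 : pw f a b (m + 1) x ≤ pw f a b n x :=
    (S.pw_strictMono_int hx).monotone (by omega)
  have h2 : f ((a+b)/2) ≤ pw f a b (m+1) x := by
    rw [S.pw_succ _ hx]
    exact S.hmono.monotoneOn S.mid_mem (S.pw_maps _ hx) hm.1
  exact absurd hn.2 (not_lt.2 (le_trans h2 h1))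

theorem Nfd_spec {x : ℝ} (hx : x ∈ Ioo a b) :
    pw f a b (Nfd f a b x) x ∈ Ico ((a+b)/2) (f ((a+b)/2)) := by
  rw [Nfd, dif_pos (S.exists_fund hx)]
  exact (S.exists_fund hx).choose_spec

theorem Nfd_eq {x : ℝ} (hx : x ∈ Ioo a b) {n : ℤ}
    (hn : pw f a b n x ∈ Ico ((a+b)/2) (f ((a+b)/2))) : Nfd f a b x = n :=
  S.fund_unique hx (S.Nfd_spec hx) hn


theorem flip_mem {d : ℝ} (hd : d ∈ Ico ((a+b)/2) (f ((a+b)/2))) :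
    (a+b)/2 + f ((a+b)/2) - d ∈ Ioc ((a+b)/2) (f ((a+b)/2)) := by
  obtain ⟨h1, h2⟩ := hd
  constructor <;> [linarith; linarith]

theorem Ico_mem_I {d : ℝ} (hd : d ∈ Ico ((a+b)/2) (f ((a+b)/2))) : d ∈ Ioo a b :=
  S.Icc_sub ⟨hd.1, le_of_lt hd.2⟩

theorem Ioc_mem_I {d : ℝ} (hd : d ∈ Ioc ((a+b)/2) (f ((a+b)/2))) : d ∈ Ioo a b :=
  S.Icc_sub ⟨le_of_lt hd.1, hd.2⟩

theorem al_eq {x : ℝ} (hx : x ∈ Ioo a b) {n : ℤ}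
    (hn : pw f a b n x ∈ Ico ((a+b)/2) (f ((a+b)/2))) :
    al f a b x = pw f a b n ((a+b)/2 + f ((a+b)/2) - pw f a b n x) := by
  rw [al, S.Nfd_eq hx hn]

theorem pw_cancel (n : ℤ) {x : ℝ} (hx : x ∈ Ioo a b) :
    pw f a b (-n) (pw f a b n x) = x := by
  rw [← S.pw_add _ _ hx, neg_add_cancel, pw_zero]

theorem al_shift {d : ℝ} (hd : d ∈ Ico ((a+b)/2) (f ((a+b)/2))) (k : ℤ) :
    al f a b (pw f a b k d) = pw f a b (-k) ((a+b)/2 + f ((a+b)/2) - d) := by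
  have hdI : d ∈ Ioo a b := S.Ico_mem_I hd
  have h1 : pw f a b (-k) (pw f a b k d) = d := S.pw_cancel k hdI
  have hn : pw f a b (-k) (pw f a b k d) ∈ Ico ((a+b)/2) (f ((a+b)/2)) := by
    rw [h1]; exact hd
  rw [S.al_eq (S.pw_maps k hdI) hn, h1]

theorem al_mem {x : ℝ} (hx : x ∈ Ioo a b) : al f a b x ∈ Ioo a b := by
  rw [al]
  exact S.pw_maps _ (S.Ioc_mem_I (S.flip_mem (S.Nfd_spec hx)))

theorem al_invol {x : ℝ} (hx : x ∈ Ioo a b) : al f a b (al f a b x) = x := by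
  set n := Nfd f a b x with hn
  have hd := S.Nfd_spec hx
  set d := pw f a b n x with hdd
  set e := (a+b)/2 + f ((a+b)/2) - d with he
  have halx : al f a b x = pw f a b n e := rfl
  have hx_eq : pw f a b (-n) d = x := S.pw_cancel n hx
  rcases lt_or_eq_of_le (S.flip_mem hd).2 with h1 | h1
  · -- e < mid1, so e ∈ Ico
    have he' : e ∈ Ico ((a+b)/2) (f ((a+b)/2)) := ⟨le_of_lt (S.flip_mem hd).1, h1⟩
    rw [halx, S.al_shift he' n]
    have : (a+b)/2 + f ((a+b)/2) - e = d := by rw [he]; ring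
    rw [this, hx_eq]
  · -- e = mid1, so d = mid
    have hdm : d = (a+b)/2 := by
      have h1' : (a+b)/2 + f ((a+b)/2) - d = f ((a+b)/2) := h1
      linarith
    have hmid : (a+b)/2 ∈ Ico ((a+b)/2) (f ((a+b)/2)) := ⟨le_refl _, S.mid_lt⟩
    have hmidI : (a+b)/2 ∈ Ioo a b := S.mid_mem
    have h2 : e = pw f a b 1 ((a+b)/2) := by rw [S.pw_one hmidI, he, hdm]; ring
    have h3 : al f a b x = pw f a b (n + 1) ((a+b)/2) := by
      rw [halx, h2, ← S.pw_add n 1 hmidI]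
    rw [h3, S.al_shift hmid (n+1)]
    have h4 : (a+b)/2 + f ((a+b)/2) - (a+b)/2 = pw f a b 1 ((a+b)/2) := by
      rw [S.pw_one hmidI]; ring
    rw [h4, ← S.pw_add _ _ hmidI]
    have : -(n+1) + 1 = -n := by ring
    rw [this, ← hdm, hx_eq]

theorem al_conj {x : ℝ} (hx : x ∈ Ioo a b) :
    f (al f a b (f x)) = al f a b x := by
  set n := Nfd f a b x with hn
  have hd := S.Nfd_spec hx
  set d := pw f a b n x with hdd
  have hdI : d ∈ Ioo a b := S.Ico_mem_I hd
  have hfx : f x = pw f a b (-(n-1)) d := by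
    have h0 : (-(n-1) : ℤ) = 1 + -n := by ring
    rw [h0, S.pw_add 1 (-n) hdI, hdd, S.pw_cancel n hx, S.pw_one hx]
  have he : (a+b)/2 + f ((a+b)/2) - d ∈ Ioo a b := S.Ioc_mem_I (S.flip_mem hd)
  rw [hfx, S.al_shift hd (-(n-1)), neg_neg, ← S.pw_one (S.pw_maps _ he), ← S.pw_add _ _ he]
  have : (1 : ℤ) + (n - 1) = n := by ring
  rw [this]
  rfl

theorem al_anti : StrictAntiOn (al f a b) (Ioo a b) := by
  intro x hx y hy hxy
  have hdx := S.Nfd_spec hx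
  have hdy := S.Nfd_spec hy
  have halx : al f a b x
      = pw f a b (Nfd f a b x) ((a+b)/2 + f ((a+b)/2) - pw f a b (Nfd f a b x) x) := rfl
  have haly : al f a b y
      = pw f a b (Nfd f a b y) ((a+b)/2 + f ((a+b)/2) - pw f a b (Nfd f a b y) y) := rfl
  generalize hNx : Nfd f a b x = n at hdx halx
  generalize hNy : Nfd f a b y = m at hdy haly
  have hmn : m ≤ n := by
    by_contra hc
    push_neg at hc
    have h1 : pw f a b n x < pw f a b n y := S.pw_strictMonoOn n hx hy hxy
    have h2 : (a+b)/2 < pw f a b n y := lt_of_le_of_lt hdx.1 h1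
    have h3 : f ((a+b)/2) < f (pw f a b n y) := S.hmono S.mid_mem (S.pw_maps _ hy) h2
    have h4 : pw f a b (n+1) y ≤ pw f a b m y := (S.pw_strictMono_int hy).monotone (by omega)
    rw [S.pw_succ _ hy] at h4
    exact absurd hdy.2 (not_lt.2 (le_trans (le_of_lt h3) h4))
  have hexI : (a+b)/2 + f ((a+b)/2) - pw f a b n x ∈ Ioo a b := S.Ioc_mem_I (S.flip_mem hdx)
  have heyI : (a+b)/2 + f ((a+b)/2) - pw f a b m y ∈ Ioo a b := S.Ioc_mem_I (S.flip_mem hdy)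
  rcases eq_or_lt_of_le hmn with heq | hlt
  · subst heq
    have h1 : pw f a b m x < pw f a b m y := S.pw_strictMonoOn m hx hy hxy
    rw [halx, haly]
    exact S.pw_strictMonoOn m heyI hexI (by linarith)
  · have hmidI : (a+b)/2 ∈ Ioo a b := S.mid_mem
    have h6 : pw f a b (m+1) ((a+b)/2) = pw f a b m (f ((a+b)/2)) := by
      rw [S.pw_add m 1 hmidI, S.pw_one hmidI]
    have step1 : al f a b y ≤ pw f a b (m+1) ((a+b)/2) := by
      rw [haly, h6]
      exact (S.pw_strictMonoOn m).monotoneOn heyI (S.maps hmidI) (by linarith [hdy.1])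
    have step2 : pw f a b (m+1) ((a+b)/2) ≤ pw f a b n ((a+b)/2) :=
      (S.pw_strictMono_int hmidI).monotone (by omega)
    have step3 : pw f a b n ((a+b)/2) < al f a b x := by
      rw [halx]
      exact S.pw_strictMonoOn n hmidI hexI (by linarith [hdx.2])
    linarith

theorem al_bij : BijOn (al f a b) (Ioo a b) (Ioo a b) := by
  refine ⟨fun x hx => S.al_mem hx, fun x hx y hy hxy => ?_, fun y hy => ?_⟩
  · rw [← S.al_invol hx, hxy, S.al_invol hy]
  · exact ⟨al f a b y, S.al_mem hy, S.al_invol hy⟩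


omit S in
theorem la_id : ∀ y : ℝ, LA id y := fun y => ⟨1, 0, Eventually.of_forall (by simp)⟩

omit S in
theorem goodPL_id' : GoodPL id (Ioo a b) := by
  intro x hx
  exact ⟨Ioo a b, isOpen_Ioo.mem_nhds hx, le_refl _, by
    have : {y ∈ Ioo a b | ¬ LA id y} = ∅ := by
      ext y; simp [la_id y]
    rw [this]; exact finite_empty⟩

/-- local affinity transfers to the inverse map -/
theorem la_inv {w : ℝ} (hw : w ∈ Ioo a b) (h : LA f w) : LA (fi f a b) (f w) := by
  obtain ⟨c, d, hcd⟩ := h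
  obtain ⟨ε, hε, hball⟩ := Metric.eventually_nhds_iff_ball.1 (hcd.and (isOpen_Ioo.eventually_mem hw))
  -- slope is positive
  have hc : 0 < c := by
    have h1 := hball w (Metric.mem_ball_self hε)
    have h2 := hball (w + ε/2) (by
      simp [Real.ball_eq_Ioo]
      constructor <;> linarith)
    have h3 : f w < f (w + ε/2) := S.hmono h1.2 h2.2 (by linarith)
    rw [h1.1, h2.1] at h3
    nlinarith
  refine ⟨1/c, -d/c, ?_⟩
  have hfw : f w ∈ Ioo a b := S.maps hw
  have htend : Tendsto (fi f a b) (𝓝 (f w)) (𝓝 w) := by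
    have := (S.finv_cont hfw).tendsto
    rwa [S.left_inv hw] at this
  filter_upwards [htend.eventually_mem (Metric.ball_mem_nhds w hε),
    isOpen_Ioo.eventually_mem hfw] with z h1z h2z
  have h3 := hball _ h1z
  have h4 : f (fi f a b z) = z := S.right_inv h2z
  rw [h3.1] at h4
  field_simp
  linarith

theorem goodPL_finv (hf : GoodPL f (Ioo a b)) : GoodPL (fi f a b) (Ioo a b) := by
  intro y hy
  have hxI : fi f a b y ∈ Ioo a b := S.finv_maps hy
  obtain ⟨s, hs, hsI, hfin⟩ := hf _ hxI
  refine ⟨Ioo a b ∩ fi f a b ⁻¹' s, inter_mem (isOpen_Ioo.mem_nhds hy)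
    ((S.finv_cont hy).preimage_mem_nhds hs), inter_subset_left, ?_⟩
  refine (hfin.image f).subset ?_
  rintro z ⟨⟨hzI, hzs⟩, hznla⟩
  refine ⟨fi f a b z, ⟨hzs, ?_⟩, S.right_inv hzI⟩
  intro hla
  have := S.la_inv (S.finv_maps hzI) hla
  rw [S.right_inv hzI] at this
  exact hznla this

theorem goodPL_iter {g : ℝ → ℝ} (hg : GoodPL g (Ioo a b)) (hm : MapsTo g (Ioo a b) (Ioo a b))
    (hc : ∀ x ∈ Ioo a b, ContinuousAt g x) (hi : InjOn g (Ioo a b)) (k : ℕ) :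
    GoodPL g^[k] (Ioo a b) := by
  induction k with
  | zero => exact goodPL_id'
  | succ k ih =>
      have := GoodPL.comp isOpen_Ioo hg ih hm hc hi
      rw [← Function.iterate_succ] at this
      exact this

theorem goodPL_pw (hf : GoodPL f (Ioo a b)) (n : ℤ) : GoodPL (pw f a b n) (Ioo a b) := by
  unfold pw
  split
  · exact S.goodPL_iter hf S.maps (fun x hx => S.cont hx) S.hmono.injOn _
  · exact S.goodPL_iter (S.goodPL_finv hf) S.finv_maps (fun x hx => S.finv_cont hx)
      S.finv_mono.injOn _

/-- points where `al` fails to be locally affine accumulate only where `pw n` breaks -/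
theorem bad_finite (hf : GoodPL f (Ioo a b)) (n : ℤ) {x : ℝ} (hx : x ∈ Ioo a b) :
    ∃ t ∈ 𝓝 x, t ⊆ Ioo a b ∧
      {y ∈ t | pw f a b n y ∈ Ioo ((a+b)/2) (f ((a+b)/2)) ∧ ¬ LA (al f a b) y}.Finite := by
  by_cases hmem : pw f a b n x ∈ Icc ((a+b)/2) (f ((a+b)/2))
  · -- main case
    set m₀ := (a+b)/2 with hm₀
    set m₁ := f ((a+b)/2) with hm₁
    have hcI : m₀ + m₁ - pw f a b n x ∈ Ioo a b :=
      S.Icc_sub ⟨by linarith [hmem.2], by linarith [hmem.1]⟩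
    obtain ⟨s, hs, hsI, hfin1⟩ := S.goodPL_pw hf n x hx
    obtain ⟨s', hs', hs'I, hfin2⟩ := S.goodPL_pw hf n _ hcI
    have hgcont : ContinuousAt (fun y => m₀ + m₁ - pw f a b n y) x :=
      continuousAt_const.sub (S.pw_cont n hx)
    refine ⟨s ∩ (fun y => m₀ + m₁ - pw f a b n y) ⁻¹' s',
      inter_mem hs (hgcont.preimage_mem_nhds hs'), fun y hy => hsI hy.1, ?_⟩
    have hkey : {y ∈ s ∩ (fun y => m₀ + m₁ - pw f a b n y) ⁻¹' s' |
        pw f a b n y ∈ Ioo m₀ m₁ ∧ ¬ LA (al f a b) y} ⊆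
        {y ∈ s | ¬ LA (pw f a b n) y} ∪
        {y ∈ Ioo a b | (m₀ + m₁ - pw f a b n y) ∈ {w ∈ s' | ¬ LA (pw f a b n) w}} := by
      rintro y ⟨⟨hys, hys'⟩, hyo, hynla⟩
      have hyI : y ∈ Ioo a b := hsI hys
      by_cases h1 : LA (pw f a b n) y
      · by_cases h2 : LA (pw f a b n) (m₀ + m₁ - pw f a b n y)
        · exfalso
          apply hynla
          obtain ⟨c1, d1, hc1⟩ := h1
          obtain ⟨c2, d2, hc2⟩ := h2
          refine ⟨-(c2*c1), c2*(m₀ + m₁ - d1) + d2, ?_⟩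
          have hU : {z | z ∈ Ioo a b ∧ pw f a b n z ∈ Ioo m₀ m₁} ∈ 𝓝 y := by
            refine inter_mem (isOpen_Ioo.mem_nhds hyI) ?_
            exact (S.pw_cont n hyI).preimage_mem_nhds (isOpen_Ioo.mem_nhds hyo)
          have htend : Tendsto (fun z => m₀ + m₁ - pw f a b n z) (𝓝 y)
              (𝓝 (m₀ + m₁ - pw f a b n y)) := (continuousAt_const.sub (S.pw_cont n hyI))
          filter_upwards [hU, hc1, htend.eventually hc2] with z hzU hz1 hz2
          have hal : al f a b z = pw f a b n (m₀ + m₁ - pw f a b n z) := by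
            have := S.al_eq hzU.1 (n := n) ⟨le_of_lt hzU.2.1, hzU.2.2⟩
            exact this
          rw [hal, hz2, hz1]
          ring
        · exact Or.inr ⟨hyI, hys', h2⟩
      · exact Or.inl ⟨hys, h1⟩
    refine (hfin1.union ?_).subset hkey
    have hinj : InjOn (fun y => m₀ + m₁ - pw f a b n y) (Ioo a b) := by
      intro y1 h1 y2 h2 heq
      simp only at heq
      exact S.pw_injOn n h1 h2 (by linarith)
    refine Set.Finite.of_finite_image ?_ (hinj.mono (fun y hy => hy.1))
    refine hfin2.subset ?_
    rintro _ ⟨y, ⟨hyI, hmem'⟩, rfl⟩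
    exact hmem'
  · -- the piece is empty near x
    have hop : IsOpen ((Icc ((a+b)/2) (f ((a+b)/2)))ᶜ) := isClosed_Icc.isOpen_compl
    refine ⟨Ioo a b ∩ pw f a b n ⁻¹' (Icc ((a+b)/2) (f ((a+b)/2)))ᶜ,
      inter_mem (isOpen_Ioo.mem_nhds hx) ((S.pw_cont n hx).preimage_mem_nhds
        (hop.mem_nhds hmem)), inter_subset_left, ?_⟩
    refine finite_empty.subset ?_
    rintro y ⟨⟨hyI, hyc⟩, hyo, -⟩
    exact hyc ⟨le_of_lt hyo.1, le_of_lt hyo.2⟩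

theorem cover {x : ℝ} (hx : x ∈ Ioo a b) :
    ∃ W ∈ 𝓝 x, W ⊆ Ioo a b ∧ ∀ y ∈ W, y ≠ x →
      pw f a b (Nfd f a b x) y ∈ Ioo ((a+b)/2) (f ((a+b)/2)) ∨
      pw f a b (Nfd f a b x + 1) y ∈ Ioo ((a+b)/2) (f ((a+b)/2)) := by
  set n := Nfd f a b x with hn
  have hd := S.Nfd_spec hx
  rcases lt_or_eq_of_le hd.1 with h1 | h1
  · -- interior case
    refine ⟨Ioo a b ∩ pw f a b n ⁻¹' Ioo ((a+b)/2) (f ((a+b)/2)),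
      inter_mem (isOpen_Ioo.mem_nhds hx)
        ((S.pw_cont n hx).preimage_mem_nhds (isOpen_Ioo.mem_nhds ⟨h1, hd.2⟩)),
      inter_subset_left, ?_⟩
    rintro y ⟨hyI, hyo⟩ -
    exact Or.inl hyo
  · -- boundary case : pw n x = mid
    have hfi : fi f a b ((a+b)/2) < (a+b)/2 := S.finv_lt S.mid_mem
    have hWn : Ioo a b ∩ pw f a b n ⁻¹' Ioo (fi f a b ((a+b)/2)) (f ((a+b)/2)) ∈ 𝓝 x := by
      refine inter_mem (isOpen_Ioo.mem_nhds hx)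
        ((S.pw_cont n hx).preimage_mem_nhds (isOpen_Ioo.mem_nhds ?_))
      rw [← h1]
      exact ⟨hfi, S.mid_lt⟩
    refine ⟨_, hWn, inter_subset_left, ?_⟩
    rintro y ⟨hyI, hyo⟩ hyx
    rcases lt_trichotomy (pw f a b n y) ((a+b)/2) with h2 | h2 | h2
    · right
      rw [S.pw_succ n hyI]
      constructor
      · have := S.hmono (S.finv_maps S.mid_mem) (S.pw_maps n hyI) hyo.1
        rwa [S.right_inv S.mid_mem] at this
      · exact S.hmono (S.pw_maps n hyI) S.mid_mem h2
    · exfalso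
      apply hyx
      apply S.pw_injOn n hyI hx
      rw [h2, ← h1]
    · exact Or.inl ⟨h2, hyo.2⟩

theorem goodPL_al (hf : GoodPL f (Ioo a b)) : GoodPL (al f a b) (Ioo a b) := by
  intro x hx
  obtain ⟨W, hW, hWI, hWcov⟩ := S.cover hx
  obtain ⟨t1, ht1, ht1I, hfin1⟩ := S.bad_finite hf (Nfd f a b x) hx
  obtain ⟨t2, ht2, ht2I, hfin2⟩ := S.bad_finite hf (Nfd f a b x + 1) hx
  refine ⟨W ∩ t1 ∩ t2, inter_mem (inter_mem hW ht1) ht2, fun y hy => hWI hy.1.1, ?_⟩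
  refine (((hfin1.union hfin2).union (finite_singleton x)).subset ?_)
  rintro y ⟨⟨⟨hyW, hyt1⟩, hyt2⟩, hynla⟩
  by_cases hyx : y = x
  · exact Or.inr (by simp [hyx])
  rcases hWcov y hyW hyx with h | h
  · exact Or.inl (Or.inl ⟨hyt1, h, hynla⟩)
  · exact Or.inl (Or.inr ⟨hyt2, h, hynla⟩)


theorem result (hpl : IsPLOn f (Ioo a b)) :
    ∃ α : ℝ → ℝ, (BijOn α (Ioo a b) (Ioo a b) ∧ StrictAntiOn α (Ioo a b) ∧
        IsPLOn α (Ioo a b)) ∧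
      (∀ x ∈ Ioo a b, α (α x) = x) ∧ ∀ x ∈ Ioo a b, f (α (f x)) = α x :=
  ⟨al f a b, ⟨S.al_bij, S.al_anti,
      (S.goodPL_al (isPLOn_goodPL isOpen_Ioo hpl)).isPLOn isOpen_Ioo⟩,
    fun _ hx => S.al_invol hx, fun _ hx => S.al_conj hx⟩

end Setup

theorem goodPL_reflect {a b : ℝ} {g : ℝ → ℝ} (h : GoodPL g (Ioo a b)) :
    GoodPL (fun x => a + b - g (a + b - x)) (Ioo a b) := by
  intro x hx
  have hrx : a + b - x ∈ Ioo a b := ⟨by linarith [hx.2], by linarith [hx.1]⟩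
  obtain ⟨s, hs, hsI, hfin⟩ := h _ hrx
  have hrc : ∀ u : ℝ, ContinuousAt (fun y : ℝ => a + b - y) u :=
    fun u => (continuousAt_const.sub continuousAt_id)
  refine ⟨(fun y : ℝ => a + b - y) ⁻¹' s, (hrc x).preimage_mem_nhds hs, ?_, ?_⟩
  · intro y hy
    have h2 := hsI hy
    simp only [mem_preimage] at h2
    obtain ⟨h21, h22⟩ := h2
    exact ⟨by linarith, by linarith⟩
  · refine (hfin.image (fun y => a + b - y)).subset ?_
    rintro y ⟨hys, hynla⟩
    refine ⟨a + b - y, ⟨hys, ?_⟩, by ring⟩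
    rintro ⟨c, d, hcd⟩
    apply hynla
    refine ⟨c, a + b - c*(a+b) - d, ?_⟩
    filter_upwards [(hrc y).eventually hcd] with z hz
    show a + b - g (a + b - z) = _
    rw [show g (a + b - z) = c * (a + b - z) + d from hz]; ring

theorem sign_dichotomy {a b : ℝ} {f : ℝ → ℝ} (hbij : BijOn f (Ioo a b) (Ioo a b))
    (hmono : StrictMonoOn f (Ioo a b)) (hfree : ∀ x ∈ Ioo a b, f x ≠ x) :
    (∀ x ∈ Ioo a b, x < f x) ∨ (∀ x ∈ Ioo a b, f x < x) := by
  have hcont : ∀ x ∈ Ioo a b, ContinuousAt f x := by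
    intro x hx
    refine hmono.continuousAt_of_image_mem_nhds (isOpen_Ioo.mem_nhds hx) ?_
    rw [hbij.image_eq]
    exact isOpen_Ioo.mem_nhds (hbij.mapsTo hx)
  by_contra hc
  push_neg at hc
  obtain ⟨⟨u, hu, hule⟩, ⟨v, hv, hvle⟩⟩ := hc
  have hult : f u < u := lt_of_le_of_ne hule (hfree u hu)
  have hvlt : v < f v := lt_of_le_of_ne (le_of_not_gt fun h => absurd h (not_lt.2 hvle))
    (Ne.symm (hfree v hv))
  set g : ℝ → ℝ := fun x => f x - x with hg
  have hsub : ∀ p q : ℝ, p ∈ Ioo a b → q ∈ Ioo a b → Icc p q ⊆ Ioo a b := by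
    intro p q hp hq z hz
    exact ⟨lt_of_lt_of_le hp.1 hz.1, lt_of_le_of_lt hz.2 hq.2⟩
  rcases le_total u v with huv | hvu
  · have hgc : ContinuousOn g (Icc u v) := fun z hz =>
      ((hcont z (hsub u v hu hv hz)).continuousWithinAt).sub continuousWithinAt_id
    have := intermediate_value_Icc huv hgc (show (0:ℝ) ∈ Icc (g u) (g v) by
      constructor <;> [simp [hg]; simp [hg]] <;> linarith)
    obtain ⟨z, hz, hgz⟩ := this
    exact hfree z (hsub u v hu hv hz) (by simp [hg] at hgz; linarith)
  · have hgc : ContinuousOn g (Icc v u) := fun z hz =>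
      ((hcont z (hsub v u hv hu hz)).continuousWithinAt).sub continuousWithinAt_id
    have := intermediate_value_Icc' hvu hgc (show (0:ℝ) ∈ Icc (g u) (g v) by
      constructor <;> [simp [hg]; simp [hg]] <;> linarith)
    obtain ⟨z, hz, hgz⟩ := this
    exact hfree z (hsub v u hv hu hz) (by simp [hg] at hgz; linarith)

theorem final (a b : ℝ) (hab : a < b) (f : ℝ → ℝ)
    (hbij : BijOn f (Ioo a b) (Ioo a b)) (hmono : StrictMonoOn f (Ioo a b))
    (hpl : IsPLOn f (Ioo a b)) (hfree : ∀ x ∈ Set.Ioo a b, f x ≠ x) :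
    ∃ α : ℝ → ℝ, (BijOn α (Ioo a b) (Ioo a b) ∧ StrictAntiOn α (Ioo a b) ∧
        IsPLOn α (Ioo a b)) ∧
      (∀ x ∈ Set.Ioo a b, α (α x) = x) ∧
      ∀ x ∈ Set.Ioo a b, f (α (f x)) = α x := by
  rcases sign_dichotomy hbij hmono hfree with hgt | hlt
  · exact (Setup.mk hab hbij hmono hgt).result hpl
  · have hrmem : ∀ x ∈ Ioo a b, a + b - x ∈ Ioo a b := fun x hx =>
      ⟨by linarith [hx.2], by linarith [hx.1]⟩
    have hrbij : BijOn (fun x : ℝ => a + b - x) (Ioo a b) (Ioo a b) :=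
      ⟨hrmem, fun x _ y _ h => by simp only at h; linarith,
        fun y hy => ⟨a + b - y, hrmem y hy, by simp⟩⟩
    set f' : ℝ → ℝ := fun x => a + b - f (a + b - x) with hf'
    have hbij' : BijOn f' (Ioo a b) (Ioo a b) := hrbij.comp (hbij.comp hrbij)
    have hmono' : StrictMonoOn f' (Ioo a b) := by
      intro x hx y hy hxy
      have := hmono (hrmem y hy) (hrmem x hx) (by linarith)
      simp only [hf']
      linarith
    have hgt' : ∀ x ∈ Ioo a b, x < f' x := by
      intro x hx
      have := hlt _ (hrmem x hx)
      simp only [hf']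
      linarith
    have S' : Setup a b f' := ⟨hab, hbij', hmono', hgt'⟩
    have hpl' : IsPLOn f' (Ioo a b) :=
      (goodPL_reflect (isPLOn_goodPL isOpen_Ioo hpl)).isPLOn isOpen_Ioo
    obtain ⟨α, ⟨hbijα, hantiα, hplα⟩, hinv, hconj⟩ := S'.result hpl'
    refine ⟨fun x => a + b - α (a + b - x), ⟨hrbij.comp (hbijα.comp hrbij), ?_, ?_⟩, ?_, ?_⟩
    · intro x hx y hy hxy
      have := hantiα (hrmem y hy) (hrmem x hx) (by linarith)
      simp only
      linarith
    · exact (goodPL_reflect (isPLOn_goodPL isOpen_Ioo hplα)).isPLOn isOpen_Ioo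
    · intro x hx
      simp only
      have h3 : a + b - (a + b - α (a + b - x)) = α (a + b - x) := by ring
      rw [h3, hinv _ (hrmem x hx)]
      ring
    · intro x hx
      simp only
      have h1 := hconj _ (hrmem x hx)
      have h2 : f' (a + b - x) = a + b - f x := by simp only [hf']; ring_nf
      rw [h2] at h1
      have h3 : f' (α (a + b - f x)) = a + b - f (a + b - α (a + b - f x)) := rfl
      rw [h3] at h1
      linarith

end PLRev

/-- Every fixed-point-free `f ∈ PL⁺(I)`, `I` an open interval, is strongly
reversible in `PL(I)` by an orientation-reversing involution `α ∈ PL⁻(I)`: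
`α² = id` and `α f α = f⁻¹` (equivalently `f ∘ α ∘ f = α` on `I`). -/
theorem fixed_point_free_strongly_reversible (a b : ℝ) (hab : a < b)
    (f : ℝ → ℝ) (hf : PLIntPlus f (Set.Ioo a b))
    (hfree : ∀ x ∈ Set.Ioo a b, f x ≠ x) :
    ∃ α : ℝ → ℝ, PLIntMinus α (Set.Ioo a b) ∧
      (∀ x ∈ Set.Ioo a b, α (α x) = x) ∧
      ∀ x ∈ Set.Ioo a b, f (α (f x)) = α x := by
  obtain ⟨hbij, hmono, hpl⟩ := hf
  obtain ⟨α, ⟨h1, h2, h3⟩, h4, h5⟩ := PLRev.final a b hab f hbij hmono hpl hfree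
  exact ⟨α, ⟨h1, h2, h3⟩, h4, h5⟩
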